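/- For a cone in ℝ³ with a centrally symmetric convex base K and apex v, the volume of the cone equals 4/7 times the volume of its difference body DC = (1/2)(C - C), where C = conv(K ∪ {v}). -/

import Mathlib

open MeasureTheory Pointwise Set
open scoped ENNReal

noncomputable section ConeAux

abbrev Mdl := (Fin 2 → ℝ) × ℝ

instance : (volume : Measure Mdl).IsAddHaarMeasure := by
  rw [Measure.volume_eq_prod]; infer_instance

variable {K₀ : Set (Fin 2 → ℝ)}

lemma smul_mono_conv (hK : Convex ℝ K₀) (h0 : (0:Fin 2 → ℝ) ∈ K₀) {a b : ℝ}
    (ha : 0 ≤ a) (hab : a ≤ b) : a • K₀ ⊆ b • K₀ := by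
  have hb : b • K₀ = a • K₀ + (b - a) • K₀ := by
    rw [← hK.add_smul ha (by linarith)]
    norm_num
  rw [hb]
  intro z hz
  exact ⟨z, hz, 0, ⟨0, h0, smul_zero _⟩, add_zero z⟩

def coneSet (K₀ : Set (Fin 2 → ℝ)) : Set Mdl :=
  {p | p.2 ∈ Icc (0:ℝ) 1 ∧ p.1 ∈ (1 - p.2) • K₀}

def diffSet (K₀ : Set (Fin 2 → ℝ)) : Set Mdl :=
  {p | p.2 ∈ Icc (-1:ℝ) 1 ∧ p.1 ∈ (2 - |p.2|) • K₀}

lemma convex_coneSet (hK : Convex ℝ K₀) : Convex ℝ (coneSet K₀) := by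
  rintro ⟨x₁, t₁⟩ ⟨⟨ht10, ht11⟩, y₁, hy₁, hxy₁⟩ ⟨x₂, t₂⟩ ⟨⟨ht20, ht21⟩, y₂, hy₂, hxy₂⟩ a b ha hb hab
  simp only at ht10 ht11 ht20 ht21 hxy₁ hxy₂
  refine ⟨⟨?_, ?_⟩, ?_⟩
  · show (0:ℝ) ≤ a * t₁ + b * t₂
    nlinarith
  · show a * t₁ + b * t₂ ≤ 1
    nlinarith
  show a • x₁ + b • x₂ ∈ (1 - (a • t₁ + b • t₂)) • K₀
  have hA : (0:ℝ) ≤ a * (1 - t₁) := by nlinarith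
  have hB : (0:ℝ) ≤ b * (1 - t₂) := by nlinarith
  have key : (1 - (a • t₁ + b • t₂)) = a * (1 - t₁) + b * (1 - t₂) := by
    simp only [smul_eq_mul]; nlinarith
  rw [key, hK.add_smul hA hB]
  refine ⟨_, ⟨y₁, hy₁, rfl⟩, _, ⟨y₂, hy₂, rfl⟩, ?_⟩
  show (a * (1 - t₁)) • y₁ + (b * (1 - t₂)) • y₂ = a • x₁ + b • x₂
  rw [mul_smul, mul_smul, hxy₁, hxy₂]

lemma coneSet_eq_hull (hK : Convex ℝ K₀) (h0 : (0:Fin 2 → ℝ) ∈ K₀) :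
    convexHull ℝ ((K₀ ×ˢ {(0:ℝ)}) ∪ {((0:Fin 2 → ℝ), (1:ℝ))}) = coneSet K₀ := by
  apply le_antisymm
  · apply convexHull_min _ (convex_coneSet hK)
    rintro ⟨x, t⟩ (⟨hx, ht⟩ | h)
    · obtain rfl : t = 0 := ht
      exact ⟨⟨le_refl 0, zero_le_one⟩, ⟨x, hx, by simp⟩⟩
    · rw [mem_singleton_iff] at h
      rw [h]
      exact ⟨⟨zero_le_one, le_refl 1⟩, ⟨0, h0, smul_zero _⟩⟩
  · rintro ⟨x, t⟩ ⟨⟨ht0, ht1⟩, y, hy, hxy⟩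
    simp only at ht0 ht1 hxy
    have h1 : ((y, (0:ℝ)) : Mdl) ∈ convexHull ℝ ((K₀ ×ˢ {(0:ℝ)}) ∪ {((0:Fin 2 → ℝ), (1:ℝ))}) :=
      subset_convexHull ℝ _ (Or.inl ⟨hy, rfl⟩)
    have h2 : (((0:Fin 2 → ℝ), (1:ℝ)) : Mdl) ∈
        convexHull ℝ ((K₀ ×ˢ {(0:ℝ)}) ∪ {((0:Fin 2 → ℝ), (1:ℝ))}) :=
      subset_convexHull ℝ _ (Or.inr rfl)
    have h3 := (convex_convexHull ℝ _) h1 h2 (by linarith : (0:ℝ) ≤ 1 - t) ht0 (by ring)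
    have h4 : (1 - t) • ((y, (0:ℝ)) : Mdl) + t • (((0:Fin 2 → ℝ), (1:ℝ)) : Mdl) = (x, t) := by
      rw [Prod.smul_mk, Prod.smul_mk, Prod.mk_add_mk, hxy]
      simp
    rwa [h4] at h3

lemma diffSet_eq_sub (hK : Convex ℝ K₀) (h0 : (0:Fin 2 → ℝ) ∈ K₀)
    (hsym : ∀ x ∈ K₀, -x ∈ K₀) :
    coneSet K₀ - coneSet K₀ = diffSet K₀ := by
  ext ⟨x, u⟩
  constructor
  · rintro ⟨⟨x₁, t₁⟩, ⟨⟨ht10, ht11⟩, y₁, hy₁, hxy₁⟩, ⟨x₂, t₂⟩, ⟨⟨ht20, ht21⟩, y₂, hy₂, hxy₂⟩, hsub⟩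
    simp only at ht10 ht11 ht20 ht21 hxy₁ hxy₂
    have hx : x₁ - x₂ = x := congrArg Prod.fst hsub
    have hu : t₁ - t₂ = u := congrArg Prod.snd hsub
    refine ⟨⟨?_, ?_⟩, ?_⟩
    · simp only [← hu]; linarith
    · simp only [← hu]; linarith
    · -- x = x₁ - x₂ ∈ (1-t₁)•K₀ + (1-t₂)•K₀ = (2-t₁-t₂)•K₀ ⊆ (2-|u|)•K₀
      have hmem : x ∈ ((1 - t₁) + (1 - t₂)) • K₀ := by
        rw [hK.add_smul (by linarith) (by linarith)]
        refine ⟨x₁, ⟨y₁, hy₁, hxy₁⟩, -x₂, ⟨-y₂, hsym y₂ hy₂, by show (1 - t₂) • -y₂ = -x₂; rw [smul_neg, hxy₂]⟩, ?_⟩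
        rw [← hx]; ring
      refine smul_mono_conv hK h0 (by linarith) ?_ hmem
      rw [← hu]
      have := abs_sub_abs_le_abs_sub t₁ t₂
      have h1 : |t₁ - t₂| ≤ t₁ + t₂ := by
        rw [abs_sub_le_iff]; constructor <;> linarith
      linarith
  · rintro ⟨⟨hu0, hu1⟩, y, hy, hxy⟩
    simp only at hu0 hu1 hxy
    rcases le_or_gt 0 u with hun | hun
    · refine ⟨((1 - u) • y, u), ⟨⟨hun, by linarith⟩, y, hy, rfl⟩,
        (-y, 0), ⟨⟨le_refl 0, zero_le_one⟩, -y, hsym y hy, by simp⟩, ?_⟩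
      show ((1 - u) • y, u) - (-y, (0:ℝ)) = (x, u)
      rw [Prod.mk_sub_mk, sub_zero, sub_neg_eq_add]
      have : (1 - u) • y + y = (2 - |u|) • y := by
        rw [abs_of_nonneg hun]
        module
      rw [this, hxy]
    · refine ⟨(y, 0), ⟨⟨le_refl 0, zero_le_one⟩, y, hy, by simp⟩,
        ((1 + u) • (-y), -u), ⟨⟨show (0:ℝ) ≤ -u by linarith, show -u ≤ 1 by linarith⟩, -y, hsym y hy, by show (1 - -u) • -y = (1 + u) • -y; norm_num⟩, ?_⟩
      show (y, (0:ℝ)) - ((1 + u) • (-y), -u) = (x, u)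
      rw [Prod.mk_sub_mk, zero_sub, neg_neg]
      have : y - (1 + u) • (-y) = (2 - |u|) • y := by
        rw [abs_of_neg hun]
        module
      rw [this, hxy]

lemma isCompact_coneSet (hKc : IsCompact K₀) : IsCompact (coneSet K₀) := by
  have himg : coneSet K₀ = (fun q : (Fin 2 → ℝ) × ℝ => ((1 - q.2) • q.1, q.2)) ''
      (K₀ ×ˢ Icc (0:ℝ) 1) := by
    ext ⟨x, t⟩
    constructor
    · rintro ⟨⟨ht0, ht1⟩, y, hy, hxy⟩
      exact ⟨(y, t), ⟨hy, ht0, ht1⟩, Prod.ext_iff.mpr ⟨hxy, rfl⟩⟩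
    · rintro ⟨⟨y, s⟩, ⟨hy, hs⟩, heq⟩
      have h1 : (1 - s) • y = x := congrArg Prod.fst heq
      have h2 : s = t := congrArg Prod.snd heq
      subst h2
      exact ⟨hs, y, hy, h1⟩
  rw [himg]
  exact (hKc.prod isCompact_Icc).image (by fun_prop)

lemma isCompact_diffSet (hKc : IsCompact K₀) : IsCompact (diffSet K₀) := by
  have himg : diffSet K₀ = (fun q : (Fin 2 → ℝ) × ℝ => ((2 - |q.2|) • q.1, q.2)) ''
      (K₀ ×ˢ Icc (-1:ℝ) 1) := by
    ext ⟨x, t⟩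
    constructor
    · rintro ⟨⟨ht0, ht1⟩, y, hy, hxy⟩
      exact ⟨(y, t), ⟨hy, ht0, ht1⟩, Prod.ext_iff.mpr ⟨hxy, rfl⟩⟩
    · rintro ⟨⟨y, s⟩, ⟨hy, hs⟩, heq⟩
      have h1 : (2 - |s|) • y = x := congrArg Prod.fst heq
      have h2 : s = t := congrArg Prod.snd heq
      subst h2
      exact ⟨hs, y, hy, h1⟩
  rw [himg]
  refine (hKc.prod isCompact_Icc).image ?_
  fun_prop

lemma int_one_sub_sq : ∫ t in Icc (0:ℝ) 1, (1 - t)^2 = 1/3 := by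
  rw [MeasureTheory.integral_Icc_eq_integral_Ioc,
    ← intervalIntegral.integral_of_le zero_le_one,
    intervalIntegral.integral_comp_sub_left (fun u => u^2) 1]
  norm_num [integral_pow]

lemma int_two_sub_abs_sq : ∫ u in Icc (-1:ℝ) 1, (2 - |u|)^2 = 14/3 := by
  rw [MeasureTheory.integral_Icc_eq_integral_Ioc,
    ← intervalIntegral.integral_of_le (by norm_num : (-1:ℝ) ≤ 1)]
  have hi : ∀ a b : ℝ, IntervalIntegrable (fun u => (2 - |u|)^2) volume a b := by
    intro a b
    apply Continuous.intervalIntegrable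
    fun_prop
  rw [← intervalIntegral.integral_add_adjacent_intervals (b := 0) (hi (-1) 0) (hi 0 1)]
  have h1 : ∫ u in (-1:ℝ)..0, (2 - |u|)^2 = ∫ u in (-1:ℝ)..0, (u + 2)^2 := by
    apply intervalIntegral.integral_congr
    intro u hu
    rw [Set.uIcc_of_le (by norm_num : (-1:ℝ) ≤ 0)] at hu
    have h : |u| = -u := abs_of_nonpos hu.2
    show (2 - |u|) ^ 2 = (u + 2) ^ 2
    rw [h]; ring
  have h2 : ∫ u in (0:ℝ)..1, (2 - |u|)^2 = ∫ u in (0:ℝ)..1, (2 - u)^2 := by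
    apply intervalIntegral.integral_congr
    intro u hu
    rw [Set.uIcc_of_le (by norm_num : (0:ℝ) ≤ 1)] at hu
    show (2 - |u|) ^ 2 = (2 - u) ^ 2
    rw [abs_of_nonneg hu.1]
  rw [h1, h2, intervalIntegral.integral_comp_add_right (fun x => x^2) 2,
    intervalIntegral.integral_comp_sub_left (fun x => x^2) 2]
  norm_num [integral_pow]

lemma volume_slice_set (K₀ : Set (Fin 2 → ℝ)) {S : Set Mdl} (hSm : MeasurableSet S)
    {I : Set ℝ} (hI : MeasurableSet I) (r : ℝ → ℝ) (hrm : Measurable r)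
    (hr : ∀ t ∈ I, 0 ≤ r t)
    (hslice₁ : ∀ t ∈ I, (fun x => (x, t)) ⁻¹' S = r t • K₀)
    (hslice₂ : ∀ t ∉ I, (fun x => (x, t)) ⁻¹' S = (∅ : Set (Fin 2 → ℝ))) :
    volume S = (∫⁻ t in I, ENNReal.ofReal (r t ^ 2)) * volume K₀ := by
  rw [show (volume : Measure Mdl) = ((volume : Measure (Fin 2 → ℝ)).prod volume) from
    Measure.volume_eq_prod _ _, Measure.prod_apply_symm hSm]
  have hcong : ∀ t : ℝ, volume ((fun x => (x, t)) ⁻¹' S) =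
      I.indicator (fun t => ENNReal.ofReal (r t ^ 2) * volume K₀) t := by
    intro t
    by_cases ht : t ∈ I
    · rw [hslice₁ t ht, indicator_of_mem ht, Measure.addHaar_smul_of_nonneg volume (hr t ht),
        Module.finrank_fin_fun ℝ]
    · rw [hslice₂ t ht, indicator_of_notMem ht, measure_empty]
  rw [lintegral_congr hcong, lintegral_indicator hI,
    lintegral_mul_const _ (by exact (hrm.pow_const 2).ennreal_ofReal)]

lemma volume_coneSet (hK : Convex ℝ K₀) (hKc : IsCompact K₀) :
    volume (coneSet K₀) = ENNReal.ofReal (1/3) * volume K₀ := by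
  have h := volume_slice_set K₀ (S := coneSet K₀) (I := Icc (0:ℝ) 1)
      (isCompact_coneSet hKc).isClosed.measurableSet
      measurableSet_Icc (fun t => 1 - t) (by fun_prop)
      (fun t ht => by simp only [mem_Icc] at ht; show (0:ℝ) ≤ 1 - t; linarith) ?_ ?_
  · rw [h, ← ofReal_integral_eq_lintegral_ofReal, int_one_sub_sq]
    · exact (Continuous.integrableOn_Icc (by fun_prop))
    · exact Filter.Eventually.of_forall fun t => by positivity
  · intro t ht
    ext x
    exact ⟨fun hx => hx.2, fun hx => ⟨ht, hx⟩⟩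
  · intro t ht
    ext x
    exact ⟨fun hx => absurd hx.1 ht, fun hx => absurd hx (notMem_empty x)⟩

lemma volume_diffSet (hK : Convex ℝ K₀) (hKc : IsCompact K₀) :
    volume (diffSet K₀) = ENNReal.ofReal (14/3) * volume K₀ := by
  have h := volume_slice_set K₀ (S := diffSet K₀) (I := Icc (-1:ℝ) 1)
      (isCompact_diffSet hKc).isClosed.measurableSet
      measurableSet_Icc (fun t => 2 - |t|) (by fun_prop)
      (fun t ht => by
        simp only [mem_Icc] at ht
        have h1 : |t| ≤ 1 := abs_le.mpr ⟨ht.1, ht.2⟩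
        show (0:ℝ) ≤ 2 - |t|
        linarith) ?_ ?_
  · rw [h, ← ofReal_integral_eq_lintegral_ofReal, int_two_sub_abs_sq]
    · exact (Continuous.integrableOn_Icc (by fun_prop))
    · refine Filter.Eventually.of_forall fun t => by positivity
  · intro t ht
    ext x
    exact ⟨fun hx => hx.2, fun hx => ⟨ht, hx⟩⟩
  · intro t ht
    ext x
    exact ⟨fun hx => absurd hx.1 ht, fun hx => absurd hx (notMem_empty x)⟩

lemma vadd_sub_vadd_set {G : Type*} [AddCommGroup G] (a : G) (s t : Set G) :
    (a +ᵥ s) - (a +ᵥ t) = s - t := by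
  ext z
  simp only [Set.mem_sub, Set.mem_vadd_set]
  constructor
  · rintro ⟨x, ⟨x', hx', rfl⟩, y, ⟨y', hy', rfl⟩, rfl⟩
    exact ⟨x', hx', y', hy', by simp only [vadd_eq_add]; abel⟩
  · rintro ⟨x, hx, y, hy, rfl⟩
    exact ⟨a + x, ⟨x, hx, rfl⟩, a + y, ⟨y, hy, rfl⟩, by abel⟩

/-- For a cone `C = conv (K ∪ {v})` in `ℝ³` over a centrally symmetric 2-dimensional
convex base `K` lying in a plane `H` (with apex `v ∉ H`), the volume of the cone equals
`4/7` times the volume of its difference body `DC = (1/2) • (C - C)`. -/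
theorem cone_volume_eq_four_sevenths_diff_body
    (H : AffineSubspace ℝ (EuclideanSpace ℝ (Fin 3)))
    (hH : Module.finrank ℝ H.direction = 2)
    (K : Set (EuclideanSpace ℝ (Fin 3)))
    (hKcompact : IsCompact K) (hKconv : Convex ℝ K)
    (hKH : K ⊆ (H : Set (EuclideanSpace ℝ (Fin 3))))
    (hKdim : affineSpan ℝ K = H)
    (c : EuclideanSpace ℝ (Fin 3))
    (hsym : ∀ x, x ∈ K ↔ (2 : ℝ) • c - x ∈ K)
    (v : EuclideanSpace ℝ (Fin 3)) (hv : v ∉ H) :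
    volume (convexHull ℝ (K ∪ {v})) =
      (4 / 7 : ℝ≥0∞) *
        volume ((2⁻¹ : ℝ) • (convexHull ℝ (K ∪ {v}) - convexHull ℝ (K ∪ {v}))) := by
  classical
  -- K is nonempty and contains c
  have hKne : K.Nonempty := by
    rcases K.eq_empty_or_nonempty with h | h
    · exfalso
      rw [h, AffineSubspace.span_empty] at hKdim
      rw [← hKdim, AffineSubspace.direction_bot] at hH
      rw [finrank_bot] at hH
      exact absurd hH (by norm_num)
    · exact h
  obtain ⟨k₀, hk₀⟩ := hKne
  have hcK : c ∈ K := by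
    have h2 := (hsym k₀).mp hk₀
    have h3 := hKconv hk₀ h2 (by norm_num : (0:ℝ) ≤ 1/2) (by norm_num : (0:ℝ) ≤ 1/2)
      (by norm_num : (1:ℝ)/2 + 1/2 = 1)
    have h4 : (1/2 : ℝ) • k₀ + (1/2 : ℝ) • ((2:ℝ) • c - k₀) = c := by module
    rwa [h4] at h3
  have hcH : c ∈ H := hKH hcK
  have hwH : v - c ∉ H.direction := by
    intro hmem
    apply hv
    have := AffineSubspace.vadd_mem_of_mem_direction hmem hcH
    simpa [vadd_eq_add, sub_add_cancel] using this
  -- the linear equivalence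
  let b : Module.Basis (Fin 2) ℝ H.direction := Module.finBasisOfFinrankEq ℝ _ hH
  let L1 : (Fin 2 → ℝ) →ₗ[ℝ] EuclideanSpace ℝ (Fin 3) :=
    H.direction.subtype ∘ₗ (b.equivFun.symm : (Fin 2 → ℝ) ≃ₗ[ℝ] H.direction).toLinearMap
  let ψ₀ : Mdl →ₗ[ℝ] EuclideanSpace ℝ (Fin 3) :=
    L1 ∘ₗ LinearMap.fst ℝ _ _ + (LinearMap.toSpanSingleton ℝ _ (v - c)) ∘ₗ LinearMap.snd ℝ _ _
  have hψ₀_apply : ∀ p : Mdl, ψ₀ p = L1 p.1 + p.2 • (v - c) := fun p => rfl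
  have hL1mem : ∀ x, L1 x ∈ H.direction := fun x => (b.equivFun.symm x).2
  have hL1sur : ∀ w : EuclideanSpace ℝ (Fin 3), w ∈ H.direction → ∃ x, L1 x = w := by
    intro w hw
    refine ⟨b.equivFun ⟨w, hw⟩, ?_⟩
    show H.direction.subtype (b.equivFun.symm (b.equivFun ⟨w, hw⟩)) = w
    rw [LinearEquiv.symm_apply_apply]
    rfl
  have hinj : Function.Injective ψ₀ := by
    rw [injective_iff_map_eq_zero]
    intro p hp
    rw [hψ₀_apply] at hp
    have hps : p.2 = 0 := by
      by_contra h2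
      apply hwH
      have hvc : v - c = (-p.2⁻¹) • L1 p.1 := by
        have : p.2 • (v - c) = -L1 p.1 := eq_neg_of_add_eq_zero_right hp
        have h3 := congrArg (fun z => p.2⁻¹ • z) this
        simp only [smul_smul, inv_mul_cancel₀ h2, one_smul] at h3
        rw [h3, smul_neg, neg_smul]
      rw [hvc]
      exact Submodule.smul_mem _ _ (hL1mem _)
    rw [hps, zero_smul, add_zero] at hp
    have h4 : p.1 = 0 := by
      have h5 : b.equivFun.symm p.1 = 0 := Subtype.ext hp
      exact b.equivFun.symm.injective (by rw [h5, map_zero])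
    exact Prod.ext h4 hps
  have hdim : Module.finrank ℝ Mdl = Module.finrank ℝ (EuclideanSpace ℝ (Fin 3)) := by simp
  let ψₑ : Mdl ≃ₗ[ℝ] EuclideanSpace ℝ (Fin 3) := ψ₀.linearEquivOfInjective hinj hdim
  let ψ : Mdl ≃L[ℝ] EuclideanSpace ℝ (Fin 3) := ψₑ.toContinuousLinearEquiv
  have hψ : ∀ p, ψ p = ψ₀ p := fun p => ψ₀.linearEquivOfInjective_apply hinj hdim p
  -- the affine map
  set aff : Mdl →ᵃ[ℝ] EuclideanSpace ℝ (Fin 3) :=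
    { toFun := fun p => c + ψ₀ p
      linear := ψ₀
      map_vadd' := by intro p q; simp only [vadd_eq_add, map_add]; abel } with haffdef
  have haff_apply : ∀ p : Mdl, aff p = c + ψ₀ p := fun p => rfl
  -- the base in the model plane
  set K₀ : Set (Fin 2 → ℝ) := (fun x => aff (x, 0)) ⁻¹' K with hK₀def
  have hgx : ∀ x, aff (x, (0:ℝ)) = c + L1 x := by
    intro x
    rw [haff_apply, hψ₀_apply]
    simp
  have hkdir : ∀ k ∈ K, k - c ∈ H.direction := by
    intro k hk
    have := AffineSubspace.vsub_mem_direction (hKH hk) hcH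
    simpa [vsub_eq_sub] using this
  have hgK : (fun x => aff (x, (0:ℝ))) '' K₀ = K := by
    apply Subset.antisymm
    · rintro _ ⟨x, hx, rfl⟩; exact hx
    · intro k hk
      obtain ⟨x, hx⟩ := hL1sur _ (hkdir k hk)
      have hax : aff (x, (0:ℝ)) = k := by rw [hgx, hx]; abel
      refine ⟨x, ?_, hax⟩
      show aff (x, (0:ℝ)) ∈ K
      rw [hax]; exact hk
  have hK₀conv : Convex ℝ K₀ := by
    intro x hx y hy a b' ha hb' hab'
    show aff (a • x + b' • y, (0:ℝ)) ∈ K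
    have heq : aff (a • x + b' • y, (0:ℝ)) = a • aff (x, (0:ℝ)) + b' • aff (y, (0:ℝ)) := by
      rw [hgx, hgx, hgx, map_add, L1.map_smul, L1.map_smul]
      have h7 : a • (c + L1 x) + b' • (c + L1 y) = (a + b') • c + (a • L1 x + b' • L1 y) := by
        module
      rw [h7, hab', one_smul]
    rw [heq]
    exact hKconv hx hy ha hb' hab'
  have h0K₀ : (0 : Fin 2 → ℝ) ∈ K₀ := by
    show aff ((0 : Fin 2 → ℝ), (0:ℝ)) ∈ K
    rw [hgx, map_zero, add_zero]
    exact hcK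
  have hsymK₀ : ∀ x ∈ K₀, -x ∈ K₀ := by
    intro x hx
    show aff (-x, (0:ℝ)) ∈ K
    have heq : aff (-x, (0:ℝ)) = (2:ℝ) • c - aff (x, (0:ℝ)) := by
      rw [hgx, hgx, map_neg]; module
    rw [heq]
    exact (hsym (aff (x, (0:ℝ)))).mp hx
  have hK₀comp : IsCompact K₀ := by
    have himg : K₀ = (fun k => (ψ.symm (k - c)).1) '' K := by
      apply Subset.antisymm
      · intro x hx
        refine ⟨aff (x, (0:ℝ)), hx, ?_⟩
        have h1 : aff (x, (0:ℝ)) - c = ψ (x, (0:ℝ)) := by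
          rw [haff_apply, hψ]; abel
        show (ψ.symm (aff (x, (0:ℝ)) - c)).1 = x
        rw [h1, ContinuousLinearEquiv.symm_apply_apply]
      · rintro _ ⟨k, hk, rfl⟩
        obtain ⟨x, hx⟩ := hL1sur _ (hkdir k hk)
        have h1 : ψ (x, (0:ℝ)) = k - c := by
          rw [hψ, hψ₀_apply]
          simpa using hx
        have h2 : ψ.symm (k - c) = (x, (0:ℝ)) := by
          rw [← h1, ContinuousLinearEquiv.symm_apply_apply]
        show (ψ.symm (k - c)).1 ∈ K₀
        rw [h2]
        show aff (x, (0:ℝ)) ∈ K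
        rw [hgx, hx, add_sub_cancel]
        exact hk
    rw [himg]
    refine hKcompact.image ?_
    exact continuous_fst.comp (ψ.symm.continuous.comp (continuous_id.sub continuous_const))
  -- measure transport
  set ν : Measure Mdl := Measure.map (⇑ψ.symm) volume with hνdef
  haveI : ν.IsAddHaarMeasure := ψ.symm.isAddHaarMeasure_map volume
  have hνeq : ν = ν.addHaarScalarFactor (volume : Measure Mdl) • (volume : Measure Mdl) :=
    Measure.isAddLeftInvariant_eq_smul ν volume
  set c₀ : ℝ≥0∞ := (ν.addHaarScalarFactor (volume : Measure Mdl) : ℝ≥0∞) with hc₀def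
  have transport : ∀ S : Set Mdl, MeasurableSet S →
      volume (⇑ψ₀ '' S) = c₀ * volume S := by
    intro S hS
    have h2 : ⇑ψ₀ '' S = ⇑ψ.symm ⁻¹' S := by
      ext z
      constructor
      · rintro ⟨p, hp, rfl⟩
        show ψ.symm (ψ₀ p) ∈ S
        rw [← hψ, ContinuousLinearEquiv.symm_apply_apply]
        exact hp
      · intro hz
        exact ⟨ψ.symm z, hz, by rw [← hψ, ContinuousLinearEquiv.apply_symm_apply]⟩
    rw [h2, ← Measure.map_apply ψ.symm.continuous.measurable hS, ← hνdef, hνeq]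
    rw [Measure.smul_apply]
    rfl
  have haffim : ∀ S : Set Mdl, ⇑aff '' S = c +ᵥ (⇑ψ₀ '' S) := by
    intro S
    ext z
    constructor
    · rintro ⟨p, hp, rfl⟩
      exact ⟨ψ₀ p, ⟨p, hp, rfl⟩, rfl⟩
    · rintro ⟨_, ⟨p, hp, rfl⟩, rfl⟩
      exact ⟨p, hp, rfl⟩
  -- the cone and its difference body
  have hunion : ⇑aff '' ((K₀ ×ˢ {(0:ℝ)}) ∪ {((0:Fin 2 → ℝ), (1:ℝ))}) = K ∪ {v} := by
    rw [image_union]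
    congr 1
    · rw [← hgK]
      apply Subset.antisymm
      · rintro _ ⟨⟨x, t⟩, ⟨hx, ht⟩, rfl⟩
        obtain rfl : t = 0 := ht
        exact ⟨x, hx, rfl⟩
      · rintro _ ⟨x, hx, rfl⟩
        exact ⟨(x, 0), ⟨hx, rfl⟩, rfl⟩
    · rw [image_singleton]
      congr 1
      rw [haff_apply, hψ₀_apply]
      simp
  have hCE : convexHull ℝ (K ∪ {v}) = ⇑aff '' coneSet K₀ := by
    rw [← hunion, ← AffineMap.image_convexHull, coneSet_eq_hull hK₀conv h0K₀]
  have hD : convexHull ℝ (K ∪ {v}) - convexHull ℝ (K ∪ {v}) = ⇑ψ₀ '' diffSet K₀ := by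
    rw [hCE, haffim, vadd_sub_vadd_set, ← Set.image_sub ψ₀,
      diffSet_eq_sub hK₀conv h0K₀ hsymK₀]
  have hhalf : (2⁻¹ : ℝ) • (⇑ψ₀ '' diffSet K₀) = ⇑ψ₀ '' ((2⁻¹ : ℝ) • diffSet K₀) :=
    (image_smul_set ψ₀ (2⁻¹:ℝ) (diffSet K₀)).symm
  have hmeas1 : MeasurableSet (coneSet K₀) := (isCompact_coneSet hK₀comp).isClosed.measurableSet
  have hmeas2 : MeasurableSet ((2⁻¹:ℝ) • diffSet K₀) := by
    have : IsCompact ((2⁻¹:ℝ) • diffSet K₀) := by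
      rw [show (2⁻¹:ℝ) • diffSet K₀ = (fun z : Mdl => (2⁻¹:ℝ) • z) '' diffSet K₀ from rfl]
      exact (isCompact_diffSet hK₀comp).image (continuous_const_smul _)
    exact this.isClosed.measurableSet
  have hvolhalf : volume ((2⁻¹:ℝ) • diffSet K₀) =
      ENNReal.ofReal ((2⁻¹:ℝ)^3) * volume (diffSet K₀) := by
    rw [Measure.addHaar_smul_of_nonneg volume (by norm_num : (0:ℝ) ≤ 2⁻¹),
      show Module.finrank ℝ Mdl = 3 by simp]
  rw [hD, hhalf, transport _ hmeas2, hCE, haffim, measure_vadd, transport _ hmeas1,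
    volume_coneSet hK₀conv hK₀comp, hvolhalf, volume_diffSet hK₀conv hK₀comp]
  have hconst : (ENNReal.ofReal (1/3) : ℝ≥0∞) =
      (4/7 : ℝ≥0∞) * (ENNReal.ofReal ((2⁻¹:ℝ)^3) * ENNReal.ofReal (14/3)) := by
    rw [← ENNReal.ofReal_mul (by norm_num : (0:ℝ) ≤ (2⁻¹:ℝ)^3)]
    rw [show ((2⁻¹:ℝ)^3 * (14/3)) = 7/12 by norm_num]
    rw [show (4/7 : ℝ≥0∞) = ENNReal.ofReal (4/7) by
      rw [ENNReal.ofReal_div_of_pos (by norm_num)]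
      norm_num]
    rw [← ENNReal.ofReal_mul (by norm_num : (0:ℝ) ≤ 4/7)]
    norm_num
  rw [hconst]
  ring
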